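/- Let I ⊆ R be a bi-homogeneous ideal and f₁,…,f_s bi-homogeneous polynomials of bidegrees (αᵢ,βᵢ) such that, setting Iᵢ = I + ⟨f₁,…,fᵢ⟩, the element f_{i+1} is a non-zero-divisor in R/Iᵢ for each i. Then the Hilbert bi-series of I_s equals (∏_{i=1}^{s}(1 − t₁^{αᵢ} t₂^{βᵢ})) · H(I), where H(I) is the Hilbert bi-series of I. -/

import Mathlib

open MvPolynomial

noncomputable section

abbrev Rvars (n k : ℕ) := Fin (n+1) ⊕ Fin (k+1)

def bw (n k : ℕ) : Rvars n k → ℕ × ℕ := Sum.elim (fun _ => (1,0)) (fun _ => (0,1))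

abbrev Rpoly (n k : ℕ) := MvPolynomial (Rvars n k) ℚ

def IsBihom (n k : ℕ) (I : Ideal (Rpoly n k)) : Prop :=
  ∀ f ∈ I, ∀ d : ℕ × ℕ, weightedHomogeneousComponent (bw n k) d f ∈ I

def Hcoeff (n k : ℕ) (I : Ideal (Rpoly n k)) (d : ℕ × ℕ) : ℕ :=
  Module.finrank ℚ
    ((weightedHomogeneousSubmodule ℚ (bw n k) d) ⧸
      (Submodule.comap (weightedHomogeneousSubmodule ℚ (bw n k) d).subtype
        (Submodule.restrictScalars ℚ I)))

def Hseries (n k : ℕ) (I : Ideal (Rpoly n k)) : MvPowerSeries (Fin 2) ℤ :=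
  fun d => (Hcoeff n k I (d 0, d 1) : ℤ)

variable {n k : ℕ}
local notation "𝒜" => weightedHomogeneousSubmodule ℚ (bw n k)
local notation "W" => bw n k

lemma comp_mul_add (g f : Rpoly n k) {d : ℕ × ℕ} (hf : IsWeightedHomogeneous W f d)
    (e' : ℕ × ℕ) :
    weightedHomogeneousComponent W (e' + d) (g * f) =
      weightedHomogeneousComponent W e' g * f := by
  classical
  conv_lhs => rw [← sum_weightedHomogeneousComponent W g,
    finsum_eq_sum _ (weightedHomogeneousComponent_finsupp g), Finset.sum_mul, map_sum]
  rw [Finset.sum_eq_single e']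
  · rcases eq_or_ne (weightedHomogeneousComponent W e' g) 0 with h | h
    · rw [h, zero_mul, map_zero]
    · exact IsWeightedHomogeneous.weightedHomogeneousComponent_same
        ((weightedHomogeneousComponent_isWeightedHomogeneous e' g).mul hf)
  · intro m _ hm
    exact IsWeightedHomogeneous.weightedHomogeneousComponent_ne _
      ((weightedHomogeneousComponent_isWeightedHomogeneous m g).mul hf)
      (fun h => hm (add_right_cancel h).symm)
  · intro h
    have : weightedHomogeneousComponent W e' g = 0 := by
      by_contra h'
      exact h ((Set.Finite.mem_toFinset _).mpr h')
    rw [this, zero_mul, map_zero]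

lemma comp_mul_not_le (g f : Rpoly n k) {d : ℕ × ℕ} (hf : IsWeightedHomogeneous W f d)
    {e : ℕ × ℕ} (hle : ¬ d ≤ e) :
    weightedHomogeneousComponent W e (g * f) = 0 := by
  classical
  conv_lhs => rw [← sum_weightedHomogeneousComponent W g,
    finsum_eq_sum _ (weightedHomogeneousComponent_finsupp g), Finset.sum_mul, map_sum]
  apply Finset.sum_eq_zero
  intro m _
  apply IsWeightedHomogeneous.weightedHomogeneousComponent_ne _
    ((weightedHomogeneousComponent_isWeightedHomogeneous m g).mul hf)
  intro h
  exact hle (h ▸ le_add_self)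

lemma decomp_le {J : Ideal (Rpoly n k)} (hJ : IsBihom n k J) {f : Rpoly n k} {d : ℕ × ℕ}
    (hf : IsWeightedHomogeneous W f d) {x : Rpoly n k} {e : ℕ × ℕ}
    (hx : IsWeightedHomogeneous W x e) (hle : d ≤ e)
    (hmem : x ∈ J ⊔ Ideal.span {f}) :
    ∃ g, IsWeightedHomogeneous W g (e - d) ∧ x - g * f ∈ J := by
  obtain ⟨a, ha, b, hb, hab⟩ := Submodule.mem_sup.mp hmem
  obtain ⟨g, hg⟩ := Ideal.mem_span_singleton'.mp hb
  subst hg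
  refine ⟨weightedHomogeneousComponent W (e - d) g,
    weightedHomogeneousComponent_isWeightedHomogeneous _ _, ?_⟩
  have hx' : weightedHomogeneousComponent W e x = x :=
    IsWeightedHomogeneous.weightedHomogeneousComponent_same hx
  have hgf : weightedHomogeneousComponent W e (g * f) =
      weightedHomogeneousComponent W (e - d) g * f := by
    conv_lhs => rw [← tsub_add_cancel_of_le hle]
    exact comp_mul_add g f hf (e - d)
  have : x - weightedHomogeneousComponent W (e - d) g * f
      = weightedHomogeneousComponent W e a := by
    rw [← hgf, ← hx', ← hab, map_add]; ring
  rw [this]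
  exact hJ a ha e

lemma decomp_not_le {J : Ideal (Rpoly n k)} (hJ : IsBihom n k J) {f : Rpoly n k} {d : ℕ × ℕ}
    (hf : IsWeightedHomogeneous W f d) {x : Rpoly n k} {e : ℕ × ℕ}
    (hx : IsWeightedHomogeneous W x e) (hle : ¬ d ≤ e)
    (hmem : x ∈ J ⊔ Ideal.span {f}) : x ∈ J := by
  obtain ⟨a, ha, b, hb, hab⟩ := Submodule.mem_sup.mp hmem
  obtain ⟨g, hg⟩ := Ideal.mem_span_singleton'.mp hb
  subst hg
  have hx' : weightedHomogeneousComponent W e x = x :=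
    IsWeightedHomogeneous.weightedHomogeneousComponent_same hx
  have : x = weightedHomogeneousComponent W e a := by
    rw [← hx', ← hab, map_add, comp_mul_not_le g f hf hle, add_zero]
  rw [this]
  exact hJ a ha e

lemma degree_of_weight (m : Rvars n k →₀ ℕ) :
    (Finsupp.weight W m).1 + (Finsupp.weight W m).2 = m.sum fun _ c => c := by
  rw [Finsupp.weight_apply, Finsupp.sum, Finsupp.sum, Prod.fst_sum, Prod.snd_sum,
    ← Finset.sum_add_distrib]
  refine Finset.sum_congr rfl fun i _ => ?_
  cases i with
  | inl a => simp [bw]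
  | inr a => simp [bw]

instance findimA (e : ℕ × ℕ) : FiniteDimensional ℚ (weightedHomogeneousSubmodule ℚ W e) := by
  apply Submodule.finiteDimensional_of_le (S₂ := restrictTotalDegree (Rvars n k) ℚ (e.1 + e.2))
  intro p hp
  rw [mem_restrictTotalDegree]
  rw [mem_weightedHomogeneousSubmodule] at hp
  apply Finset.sup_le
  intro m hm
  have := hp (mem_support_iff.mp hm)
  rw [← degree_of_weight m, this]

def Ndeg (J : Ideal (Rpoly n k)) (e : ℕ × ℕ) :
    Submodule ℚ (weightedHomogeneousSubmodule ℚ W e) :=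
  Submodule.comap (weightedHomogeneousSubmodule ℚ W e).subtype (Submodule.restrictScalars ℚ J)

abbrev Qd (J : Ideal (Rpoly n k)) (e : ℕ × ℕ) :=
  (weightedHomogeneousSubmodule ℚ W e) ⧸ Ndeg J e

lemma mem_Ndeg {J : Ideal (Rpoly n k)} {e : ℕ × ℕ}
    {x : weightedHomogeneousSubmodule ℚ W e} : x ∈ Ndeg J e ↔ (x : Rpoly n k) ∈ J :=
  Iff.rfl

lemma key (J : Ideal (Rpoly n k)) (hJ : IsBihom n k J) (f : Rpoly n k) (d : ℕ × ℕ)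
    (hf : IsWeightedHomogeneous W f d)
    (hreg : ∀ g, g * f ∈ J → g ∈ J) (e : ℕ × ℕ) :
    (Module.finrank ℚ (Qd J e) : ℤ) =
      Module.finrank ℚ (Qd (J ⊔ Ideal.span {f}) e) +
        (if d ≤ e then (Module.finrank ℚ (Qd J (e - d)) : ℤ) else 0) := by
  classical
  set J' := J ⊔ Ideal.span {f} with hJ'
  have hJJ' : J ≤ J' := le_sup_left
  -- the projection map
  have hπc : Ndeg (n := n) (k := k) J e ≤ (Ndeg J' e).comap LinearMap.id := fun x hx => hJJ' hx
  set π : Qd J e →ₗ[ℚ] Qd J' e := Submodule.mapQ _ _ LinearMap.id hπc with hπ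
  have hπ_apply : ∀ x, π (Submodule.Quotient.mk x) = Submodule.Quotient.mk x := by
    intro x; rw [hπ, Submodule.mapQ_apply]; rfl
  have hπsurj : Function.Surjective π := by
    intro y
    obtain ⟨x, rfl⟩ := Submodule.Quotient.mk_surjective _ y
    exact ⟨Submodule.Quotient.mk x, hπ_apply x⟩
  have hkerπ : ∀ x : weightedHomogeneousSubmodule ℚ W e,
      Submodule.Quotient.mk (p := Ndeg J e) x ∈ LinearMap.ker π ↔ (x : Rpoly n k) ∈ J' := by
    intro x
    rw [LinearMap.mem_ker, hπ_apply, Submodule.Quotient.mk_eq_zero]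
    exact mem_Ndeg
  by_cases hle : d ≤ e
  · rw [if_pos hle]
    -- multiplication map
    have hmul : ∀ x ∈ weightedHomogeneousSubmodule ℚ W (e - d),
        (LinearMap.mulRight ℚ f) x ∈ weightedHomogeneousSubmodule ℚ W e := by
      intro x hx
      rw [mem_weightedHomogeneousSubmodule] at hx ⊢
      have := hx.mul hf
      rwa [tsub_add_cancel_of_le hle] at this
    set mulf := (LinearMap.mulRight ℚ f).restrict hmul with hmulf
    have hmulf_apply : ∀ x, ((mulf x : Rpoly n k)) = (x : Rpoly n k) * f := fun x => rfl
    have hμc : Ndeg (n := n) (k := k) J (e - d) ≤ (Ndeg J e).comap mulf := by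
      intro x hx
      simp only [Submodule.mem_comap, mem_Ndeg, hmulf_apply]
      exact Ideal.mul_mem_right f J hx
    set μ : Qd J (e - d) →ₗ[ℚ] Qd J e := Submodule.mapQ _ _ mulf hμc with hμ
    have hμ_apply : ∀ x, μ (Submodule.Quotient.mk x) = Submodule.Quotient.mk (mulf x) := by
      intro x; rw [hμ, Submodule.mapQ_apply]
    have hμinj : Function.Injective μ := by
      rw [← LinearMap.ker_eq_bot, eq_bot_iff]
      intro q hq
      obtain ⟨x, rfl⟩ := Submodule.Quotient.mk_surjective _ q
      rw [LinearMap.mem_ker, hμ_apply, Submodule.Quotient.mk_eq_zero, mem_Ndeg,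
        hmulf_apply] at hq
      rw [Submodule.mem_bot, Submodule.Quotient.mk_eq_zero, mem_Ndeg]
      exact hreg _ hq
    have hker : LinearMap.ker π = LinearMap.range μ := by
      ext q
      obtain ⟨x, rfl⟩ := Submodule.Quotient.mk_surjective _ q
      rw [hkerπ]
      constructor
      · intro hx
        obtain ⟨g, hg, hgf⟩ := decomp_le hJ hf (((mem_weightedHomogeneousSubmodule ℚ W _ _).mp x.2))
          hle hx
        refine ⟨Submodule.Quotient.mk ⟨g, hg⟩, ?_⟩
        rw [hμ_apply, Submodule.Quotient.eq]
        rw [mem_Ndeg]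
        push_cast [hmulf_apply]
        simpa using (J.neg_mem hgf)
      · rintro ⟨p, hp⟩
        obtain ⟨y, rfl⟩ := Submodule.Quotient.mk_surjective _ p
        rw [hμ_apply, Submodule.Quotient.eq, mem_Ndeg] at hp
        have h1 : ((mulf y : Rpoly n k)) ∈ J' := by
          rw [hmulf_apply]
          exact Ideal.mul_mem_left _ _ (le_sup_right (α := Ideal (Rpoly n k))
            (Ideal.subset_span rfl))
        have h2 : ((mulf y : Rpoly n k)) - (x : Rpoly n k) ∈ J' := hJJ' hp
        have := J'.sub_mem h1 h2
        simpa using this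
    have c1 := LinearMap.finrank_range_add_finrank_ker π
    have c2 : Module.finrank ℚ (LinearMap.range π) = Module.finrank ℚ (Qd J' e) := by
      rw [LinearMap.range_eq_top.mpr hπsurj]
      exact finrank_top ℚ _
    have c3 : Module.finrank ℚ (LinearMap.ker π) = Module.finrank ℚ (Qd J (e - d)) := by
      rw [hker]
      exact (LinearMap.finrank_range_of_inj hμinj)
    rw [c2, c3] at c1
    exact_mod_cast c1.symm
  · rw [if_neg hle, add_zero]
    have hπinj : Function.Injective π := by
      rw [← LinearMap.ker_eq_bot, eq_bot_iff]
      intro q hq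
      obtain ⟨x, rfl⟩ := Submodule.Quotient.mk_surjective _ q
      rw [LinearMap.mem_ker, hπ_apply, Submodule.Quotient.mk_eq_zero, mem_Ndeg] at hq
      rw [Submodule.mem_bot, Submodule.Quotient.mk_eq_zero, mem_Ndeg]
      exact decomp_not_le hJ hf (((mem_weightedHomogeneousSubmodule ℚ W _ _).mp x.2)) hle hq
    exact_mod_cast (LinearEquiv.ofBijective π ⟨hπinj, hπsurj⟩).finrank_eq

instance gradedNK : GradedAlgebra (weightedHomogeneousSubmodule ℚ W) :=
  weightedGradedAlgebra ℚ W

lemma decompose_coe (φ : Rpoly n k) (m : ℕ × ℕ) :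
    (DirectSum.decompose (weightedHomogeneousSubmodule ℚ W) φ m : Rpoly n k) =
      weightedHomogeneousComponent W m φ :=
  MvPolynomial.decompose'_apply ℚ W φ m

lemma isBihom_iff (J : Ideal (Rpoly n k)) :
    IsBihom n k J ↔ J.IsHomogeneous (weightedHomogeneousSubmodule ℚ W) := by
  constructor
  · intro h i r hr
    rw [decompose_coe]
    exact h r hr i
  · intro h r hr e
    have := h e hr
    rwa [decompose_coe] at this

lemma isBihom_sup_span {J : Ideal (Rpoly n k)} (hJ : IsBihom n k J) (S : Set (Rpoly n k))
    (hS : ∀ x ∈ S, ∃ d : ℕ × ℕ, IsWeightedHomogeneous W x d) :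
    IsBihom n k (J ⊔ Ideal.span S) := by
  rw [isBihom_iff] at hJ ⊢
  exact hJ.sup (Ideal.homogeneous_span _ S
    (fun x hx => by obtain ⟨d, hd⟩ := hS x hx; exact ⟨d, hd⟩))

lemma Hcoeff_eq (J : Ideal (Rpoly n k)) (e : ℕ × ℕ) :
    Hcoeff n k J e = Module.finrank ℚ (Qd J e) := rfl

lemma coeff_Hseries (J : Ideal (Rpoly n k)) (m : Fin 2 →₀ ℕ) :
    MvPowerSeries.coeff m (Hseries n k J) = (Hcoeff n k J (m 0, m 1) : ℤ) := rfl

lemma Hseries_step (J : Ideal (Rpoly n k)) (hJ : IsBihom n k J) (f : Rpoly n k) (d : ℕ × ℕ)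
    (hf : IsWeightedHomogeneous W f d) (hreg : ∀ g, g * f ∈ J → g ∈ J) :
    Hseries n k (J ⊔ Ideal.span {f}) =
      (1 - MvPowerSeries.X 0 ^ d.1 * MvPowerSeries.X 1 ^ d.2) * Hseries n k J := by
  classical
  have hX : (MvPowerSeries.X 0 ^ d.1 * MvPowerSeries.X 1 ^ d.2 : MvPowerSeries (Fin 2) ℤ) =
      MvPowerSeries.monomial (Finsupp.single 0 d.1 + Finsupp.single 1 d.2) 1 := by
    rw [MvPowerSeries.X_pow_eq, MvPowerSeries.X_pow_eq, MvPowerSeries.monomial_mul_monomial,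
      one_mul]
  apply MvPowerSeries.ext
  intro m
  rw [hX, sub_mul, one_mul, map_sub, MvPowerSeries.coeff_monomial_mul]
  rw [coeff_Hseries, coeff_Hseries]
  have hle : (Finsupp.single (0 : Fin 2) d.1 + Finsupp.single 1 d.2 ≤ m) ↔ d ≤ (m 0, m 1) := by
    rw [Finsupp.le_def, Prod.le_def, Fin.forall_fin_two]
    simp [Finsupp.single_apply]
  have hk := key J hJ f d hf hreg (m 0, m 1)
  rw [Hcoeff_eq, Hcoeff_eq]
  by_cases h : d ≤ ((m 0 : ℕ), (m 1 : ℕ))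
  · rw [if_pos (hle.mpr h)]
    rw [if_pos h] at hk
    rw [coeff_Hseries, Hcoeff_eq]
    have hs : (((m - (Finsupp.single (0 : Fin 2) d.1 + Finsupp.single 1 d.2) : Fin 2 →₀ ℕ)) 0,
        ((m - (Finsupp.single (0 : Fin 2) d.1 + Finsupp.single 1 d.2) : Fin 2 →₀ ℕ)) 1)
        = ((m 0 : ℕ), (m 1 : ℕ)) - d := by
      have h0 : ((m - (Finsupp.single (0 : Fin 2) d.1 + Finsupp.single 1 d.2) : Fin 2 →₀ ℕ)) 0
          = m 0 - d.1 := by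
        rw [Finsupp.tsub_apply]
        simp [Finsupp.single_apply]
      have h1 : ((m - (Finsupp.single (0 : Fin 2) d.1 + Finsupp.single 1 d.2) : Fin 2 →₀ ℕ)) 1
          = m 1 - d.2 := by
        rw [Finsupp.tsub_apply]
        simp [Finsupp.single_apply]
      rw [h0, h1]
      rfl
    rw [hs]
    linear_combination -hk
  · rw [if_neg (fun hc => h (hle.mp hc))]
    rw [if_neg h, add_zero] at hk
    rw [sub_zero, hk]

theorem hilbert_biseries_regular_sequence' (n k s : ℕ) (I : Ideal (Rpoly n k))
    (hI : IsBihom n k I) (f : Fin s → Rpoly n k) (db : Fin s → ℕ × ℕ)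
    (hf : ∀ i, IsWeightedHomogeneous (bw n k) (f i) (db i))
    (hreg : ∀ i : Fin s, ∀ g : Rpoly n k,
      g * f i ∈ I ⊔ Ideal.span (f '' {j | j < i}) →
      g ∈ I ⊔ Ideal.span (f '' {j | j < i})) :
    Hseries n k (I ⊔ Ideal.span (Set.range f)) =
      (∏ i : Fin s,
        (1 - MvPowerSeries.X 0 ^ (db i).1 * MvPowerSeries.X 1 ^ (db i).2)) *
        Hseries n k I := by
  induction s with
  | zero =>
    rw [Set.range_eq_empty f, Ideal.span_empty, sup_bot_eq]
    simp
  | succ s ih =>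
    set fc : Fin s → Rpoly n k := f ∘ Fin.castSucc with hfc
    set dc : Fin s → ℕ × ℕ := db ∘ Fin.castSucc with hdc
    have hlt_last : {j : Fin (s+1) | j < Fin.last s} = Set.range (Fin.castSucc) := by
      ext j
      constructor
      · intro hj
        exact ⟨⟨j.1, hj⟩, Fin.ext rfl⟩
      · rintro ⟨i, rfl⟩
        exact Fin.castSucc_lt_last i
    have himg : f '' {j | j < Fin.last s} = Set.range fc := by
      rw [hlt_last, ← Set.range_comp]
    have hcs : ∀ i : Fin s, Fin.castSucc '' {j : Fin s | j < i} = {j : Fin (s+1) | j < Fin.castSucc i} := by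
      intro i
      ext j
      constructor
      · rintro ⟨j', hj', rfl⟩
        exact Fin.castSucc_lt_castSucc_iff.mpr hj'
      · intro hj
        have hji : j.1 < i.1 := hj
        have hjs : j.1 < s := lt_trans hji i.2
        exact ⟨⟨j.1, hjs⟩, hji, Fin.ext rfl⟩
    have himg2 : ∀ i : Fin s, fc '' {j : Fin s | j < i} = f '' {j : Fin (s+1) | j < Fin.castSucc i} := by
      intro i
      rw [hfc, Set.image_comp, hcs]
    have hrange : Set.range f = Set.range fc ∪ {f (Fin.last s)} := by
      ext y
      constructor
      · rintro ⟨i, rfl⟩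
        rcases Fin.eq_castSucc_or_eq_last i with ⟨j, rfl⟩ | rfl
        · exact Or.inl ⟨j, rfl⟩
        · exact Or.inr rfl
      · rintro (⟨j, rfl⟩ | h)
        · exact ⟨Fin.castSucc j, rfl⟩
        · exact ⟨Fin.last s, h.symm⟩
    set J := I ⊔ Ideal.span (Set.range fc) with hJdef
    have hJ : IsBihom n k J := by
      apply isBihom_sup_span hI
      rintro x ⟨j, rfl⟩
      exact ⟨dc j, hf _⟩
    have hid : I ⊔ Ideal.span (Set.range f) = J ⊔ Ideal.span {f (Fin.last s)} := by
      rw [hrange, Ideal.span_union, ← sup_assoc]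
    have hreg_last : ∀ g, g * f (Fin.last s) ∈ J → g ∈ J := by
      intro g h
      have := hreg (Fin.last s) g
      rw [himg, ← hJdef] at this
      exact this h
    have hreg' : ∀ i : Fin s, ∀ g : Rpoly n k,
        g * fc i ∈ I ⊔ Ideal.span (fc '' {j | j < i}) →
        g ∈ I ⊔ Ideal.span (fc '' {j | j < i}) := by
      intro i g h
      rw [himg2 i] at h ⊢
      exact hreg (Fin.castSucc i) g h
    rw [hid, Hseries_step J hJ (f (Fin.last s)) (db (Fin.last s)) (hf _) hreg_last,
      ih fc dc (fun i => hf _) hreg', Fin.prod_univ_castSucc]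
    simp only [hdc, Function.comp_apply]
    ring

/-- Adding to a bi-homogeneous ideal a sequence of bi-homogeneous non-zero-divisors
of bidegrees (αᵢ,βᵢ) multiplies the Hilbert bi-series by ∏(1 - t₁^{αᵢ} t₂^{βᵢ}). -/
theorem hilbert_biseries_regular_sequence (n k s : ℕ) (I : Ideal (Rpoly n k))
    (hI : IsBihom n k I) (f : Fin s → Rpoly n k) (db : Fin s → ℕ × ℕ)
    (hf : ∀ i, IsWeightedHomogeneous (bw n k) (f i) (db i))
    (hreg : ∀ i : Fin s, ∀ g : Rpoly n k,
      g * f i ∈ I ⊔ Ideal.span (f '' {j | j < i}) →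
      g ∈ I ⊔ Ideal.span (f '' {j | j < i})) :
    Hseries n k (I ⊔ Ideal.span (Set.range f)) =
      (∏ i : Fin s,
        (1 - MvPowerSeries.X 0 ^ (db i).1 * MvPowerSeries.X 1 ^ (db i).2)) *
        Hseries n k I :=
  hilbert_biseries_regular_sequence' n k s I hI f db hf hreg
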